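/- Let a, b, c ∈ ℝ. There exist real numbers s₁, s₂, s₃ satisfying s₁ + s₂ + s₃ = a, s₁² + s₂² + s₃² = b, and s₁³ + s₂³ + s₃³ = c if and only if (b − a²/3)³ ≥ 6·(c − ab + (2/9)a³)². -/

import Mathlib

theorem stmt_1 (a b c : ℝ) :
    (∃ s₁ s₂ s₃ : ℝ, s₁ + s₂ + s₃ = a ∧ s₁ ^ 2 + s₂ ^ 2 + s₃ ^ 2 = b ∧
      s₁ ^ 3 + s₂ ^ 3 + s₃ ^ 3 = c) ↔
    (b - a ^ 2 / 3) ^ 3 ≥ 6 * (c - a * b + (2 / 9) * a ^ 3) ^ 2 := by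
  constructor
  · rintro ⟨s₁, s₂, s₃, h1, h2, h3⟩
    subst h1 h2 h3
    nlinarith [sq_nonneg ((s₁ - s₂) * (s₂ - s₃) * (s₃ - s₁)), sq_nonneg (s₁-s₂), sq_nonneg (s₂-s₃), sq_nonneg (s₃-s₁)]
  · intro h
    set p := b - a ^ 2 / 3 with hp
    set q := c - a * b + (2 / 9) * a ^ 3 with hq
    clear_value p q
    rcases le_or_gt p 0 with hp0 | hp0
    · have hp3 : p ^ 3 ≤ 0 := by nlinarith [sq_nonneg p, mul_nonneg (mul_nonneg (neg_nonneg.mpr hp0) (neg_nonneg.mpr hp0)) (neg_nonneg.mpr hp0)]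
      have hq2 : q ^ 2 ≤ 0 := by linarith
      have hq0 : q = 0 := by nlinarith [sq_nonneg q]
      have hpe : p = 0 := by
        have h1 : 0 ≤ p ^ 3 := by nlinarith [sq_nonneg q]
        by_contra hne
        have hplt : p < 0 := lt_of_le_of_ne hp0 hne
        nlinarith [mul_pos (mul_pos (neg_pos.mpr hplt) (neg_pos.mpr hplt)) (neg_pos.mpr hplt)]
      refine ⟨a/3, a/3, a/3, by ring, ?_, ?_⟩
      · have : b = a^2/3 := by rw [hp] at hpe; linarith
        rw [this]; ring
      · have hb : b = a^2/3 := by rw [hp] at hpe; linarith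
        have hc : c = a * b - (2/9) * a^3 := by rw [hq] at hq0; linarith
        rw [hc, hb]; ring
    · set m := Real.sqrt (2 * p / 3) with hm
      have hm0 : 0 < m := Real.sqrt_pos.mpr (by linarith)
      have hm2 : m ^ 2 = 2 * p / 3 := Real.sq_sqrt (by linarith)
      have hm3 : 0 < m ^ 3 := by positivity
      set t := 4 * q / (3 * m ^ 3) with ht
      have hm6 : m ^ 6 = 8 * p ^ 3 / 27 := by
        have : m ^ 6 = (m ^ 2) ^ 3 := by ring
        rw [this, hm2]; ring
      have ht2 : t ^ 2 ≤ 1 := by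
        rw [ht, div_pow, div_le_one (by positivity)]
        nlinarith
      have ht1 : -1 ≤ t := by nlinarith
      have ht1' : t ≤ 1 := by nlinarith
      set θ := Real.arccos t / 3 with hθ
      have hcos3 : Real.cos (3 * θ) = t := by
        rw [hθ]
        rw [show 3 * (Real.arccos t / 3) = Real.arccos t by ring]
        exact Real.cos_arccos ht1 ht1'
      set u := Real.cos θ with hu
      set v := Real.sin θ with hv
      have pyth : u ^ 2 + v ^ 2 = 1 := by
        rw [hu, hv]; rw [add_comm]; exact Real.sin_sq_add_cos_sq θ
      have htriple : 4 * u ^ 3 - 3 * u = t := by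
        rw [← hcos3, Real.cos_three_mul]
      set w := Real.sqrt 3 with hw
      have hw2 : w ^ 2 = 3 := Real.sq_sqrt (by norm_num)
      have hqeq : (3 / 4) * m ^ 3 * (4 * u ^ 3 - 3 * u) = q := by
        rw [htriple, ht]
        field_simp
      refine ⟨a / 3 + m * u, a / 3 + m * (-u / 2 + (w / 2) * v),
        a / 3 + m * (-u / 2 - (w / 2) * v), by ring, ?_, ?_⟩
      · have : b = p + a ^ 2 / 3 := by rw [hp]; ring
        rw [this]
        linear_combination (m ^ 2 * v ^ 2 / 2) * hw2 + (3 * m ^ 2 / 2) * pyth + (3 / 2) * hm2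
      · have : c = q + a * b - (2 / 9) * a ^ 3 := by rw [hq]; ring
        rw [this]
        linear_combination hqeq + (a * m ^ 2 * v ^ 2 / 2 - 3 * m ^ 3 * u * v ^ 2 / 4) * hw2 + (3 * a * m ^ 2 / 2 - 9 / 4 * m ^ 3 * u) * pyth + (3 * a / 2) * hm2 + a * hp
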